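/- (Gelfand–Tsetlin / Cohn–Larsen–Propp count as a Vandermonde-type product.) For integers 1 ≤ x_1 < x_2 < ... < x_n ≤ m+n, the quantity ∏_{1 ≤ i < j ≤ n} (x_j − x_i)/(j − i) is a positive integer. -/

import Mathlib

open Finset Polynomial

private lemma prod_pairs_aux {M : Type*} [CommMonoid M] {n : ℕ} (f : Fin n → Fin n → M) :
    ∏ p ∈ Finset.univ.filter (fun p : Fin n × Fin n => p.1 < p.2), f p.1 p.2
      = ∏ i, ∏ j ∈ Finset.Ioi i, f i j := by
  rw [Finset.prod_sigma']
  refine Finset.prod_bij (fun (p : Fin n × Fin n) _ => (⟨p.1, p.2⟩ : (_ : Fin n) × Fin n)) ?_ ?_ ?_ ?_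
  · rintro ⟨i, j⟩ h
    simp only [Finset.mem_filter, Finset.mem_univ, true_and] at h
    simp [Finset.mem_sigma, Finset.mem_Ioi, h]
  · rintro ⟨i, j⟩ _ ⟨i', j'⟩ _ h
    simp only [Sigma.mk.inj_iff, heq_eq_eq] at h
    obtain ⟨rfl, rfl⟩ := h
    rfl
  · rintro ⟨i, j⟩ h
    simp only [Finset.mem_sigma, Finset.mem_univ, Finset.mem_Ioi, true_and] at h
    exact ⟨(i, j), by simp [h], rfl⟩
  · rintro ⟨i, j⟩ _; rfl

private lemma sf_pos : ∀ k : ℕ, 0 < Nat.superFactorial k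
  | 0 => Nat.one_pos
  | (k+1) => Nat.mul_pos (Nat.factorial_pos _) (sf_pos k)

theorem gelfand_tsetlin_count_pos_int (m n : ℕ) (x : Fin n → ℤ)
    (hmono : StrictMono x) (h1 : ∀ i, 1 ≤ x i) (h2 : ∀ i, x i ≤ (m : ℤ) + n) :
    ∃ N : ℕ, 0 < N ∧
      (∏ p ∈ Finset.univ.filter (fun p : Fin n × Fin n => p.1 < p.2),
          (((x p.2 : ℚ) - (x p.1 : ℚ)) / (((p.2 : ℕ) : ℚ) - ((p.1 : ℕ) : ℚ)))) = (N : ℚ) := by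
  rcases n with _ | k
  · exact ⟨1, one_pos, by simp⟩
  · have hdvd : ((Nat.superFactorial k : ℤ)) ∣ (Matrix.vandermonde x).det :=
      Matrix.superFactorial_dvd_vandermonde_det x
    obtain ⟨c, hc⟩ := hdvd
    have hV : (Matrix.vandermonde x).det = ∏ i, ∏ j ∈ Finset.Ioi i, (x j - x i) :=
      Matrix.det_vandermonde x
    have hVpos : 0 < (Matrix.vandermonde x).det := by
      rw [hV]
      apply Finset.prod_pos
      intro i _
      apply Finset.prod_pos
      intro j hj
      rw [Finset.mem_Ioi] at hj
      exact sub_pos.mpr (hmono hj)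
    have hsf : 0 < Nat.superFactorial k := sf_pos k
    have hsfpos : (0:ℤ) < (Nat.superFactorial k : ℤ) := by exact_mod_cast hsf
    have hcpos : 0 < c := by
      by_contra h
      push_neg at h
      nlinarith [hc]
    refine ⟨c.toNat, by omega, ?_⟩
    rw [Finset.prod_div_distrib]
    have hnum : (∏ p ∈ Finset.univ.filter (fun p : Fin (k+1) × Fin (k+1) => p.1 < p.2),
        ((x p.2 : ℚ) - (x p.1 : ℚ))) = ((Matrix.vandermonde x).det : ℚ) := by
      rw [prod_pairs_aux (fun i j => ((x j : ℚ) - (x i : ℚ))), hV]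
      push_cast
      rfl
    have hden : (∏ p ∈ Finset.univ.filter (fun p : Fin (k+1) × Fin (k+1) => p.1 < p.2),
        (((p.2 : ℕ) : ℚ) - ((p.1 : ℕ) : ℚ))) = (Nat.superFactorial k : ℚ) := by
      rw [prod_pairs_aux (fun i j : Fin (k+1) => ((j : ℕ) : ℚ) - ((i : ℕ) : ℚ))]
      rw [← Matrix.det_vandermonde_id_eq_superFactorial (R := ℚ) k, Matrix.det_vandermonde]
    rw [hnum, hden, hc, Int.cast_mul, Int.cast_natCast, mul_comm, mul_div_assoc,
      div_self (Nat.cast_ne_zero.mpr hsf.ne' : (Nat.superFactorial k : ℚ) ≠ 0), mul_one]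
    exact_mod_cast (Int.toNat_of_nonneg hcpos.le).symm
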